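/- Let X be a nonempty finite set and N ≥ 2. With the forward trajectory probability P(x₁,…,x_N) = q₁(x₁) · Π_{k=1}^{N−1} P_k(x_{k+1}|x_k) (where q₁ is a probability mass function on X and each P_k(·|x) is a probability mass function on X), marginal q_N of x_N, backward kernels B_k(·|x') (each a probability mass function on X), and backward trajectory probability P_B(x₁,…,x_N) = q_N(x_N) · Π_{k=1}^{N−1} B_k(x_k|x_{k+1}), suppose the forward and backward trajectory measures have equal supports: P(O) > 0 if and only if P_B(O) > 0. Define σ(O) = ln( P(O)/P_B(O) ) for trajectories with P(O) > 0. Then the integral fluctuation theorem holds: Σ_{O : P(O) > 0} P(O) · exp(−σ(O)) = 1. -/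

import Mathlib

private lemma bwd_sum {X : Type*} [Fintype X] [DecidableEq X] :
    ∀ (n : ℕ) (B : ℕ → X → X → ℝ) (_ : ∀ k x', ∑ x, B k x' x = 1) (f : X → ℝ),
    ∑ O : Fin (n + 1) → X,
      f (O (Fin.last n)) * ∏ k : Fin n, B k (O k.succ) (O k.castSucc) = ∑ x, f x := by
  intro n
  induction n with
  | zero =>
    intro B hB f
    rw [← (Equiv.funUnique (Fin 1) X).symm.sum_comp]
    simp
  | succ n ih =>
    intro B hB f
    rw [← (Fin.consEquiv (fun _ : Fin (n + 2) => X)).sum_comp]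
    rw [Fintype.sum_prod_type]
    have key : ∀ (x : X) (t : Fin (n + 1) → X),
        f ((Fin.consEquiv (fun _ : Fin (n + 2) => X)) (x, t) (Fin.last (n + 1))) *
          ∏ k : Fin (n + 1), B k ((Fin.consEquiv (fun _ : Fin (n + 2) => X)) (x, t) k.succ)
            ((Fin.consEquiv (fun _ : Fin (n + 2) => X)) (x, t) k.castSucc)
        = B 0 (t 0) x *
          (f (t (Fin.last n)) * ∏ k : Fin n, B ((k : ℕ) + 1) (t k.succ) (t k.castSucc)) := by
      intro x t
      simp only [Fin.consEquiv_apply]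
      rw [Fin.prod_univ_succ]
      have h1 : ∀ k : Fin n,
          B ((k.succ : Fin (n+1)) : ℕ)
            ((Fin.cons x t : Fin (n + 2) → X) (k.succ : Fin (n+1)).succ)
            ((Fin.cons x t : Fin (n + 2) → X) (k.succ : Fin (n+1)).castSucc)
          = B ((k : ℕ) + 1) (t k.succ) (t k.castSucc) := by
        intro k
        have e1 : ((k.succ : Fin (n+1)).castSucc : Fin (n+2)) = (k.castSucc).succ := by
          ext; simp
        rw [e1, Fin.cons_succ, Fin.cons_succ, Fin.val_succ]
      simp only [h1]
      have elast : (Fin.last (n + 1)) = (Fin.last n).succ := by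
        simp [Fin.succ_last]
      rw [elast]
      simp only [Fin.cons_succ, Fin.castSucc_zero, Fin.cons_zero, Fin.val_zero]
      ring
    simp only [key]
    rw [Finset.sum_comm]
    have hs : ∀ t : Fin (n + 1) → X,
        ∑ x : X, B 0 (t 0) x *
          (f (t (Fin.last n)) * ∏ k : Fin n, B ((k : ℕ) + 1) (t k.succ) (t k.castSucc))
        = f (t (Fin.last n)) * ∏ k : Fin n, B ((k : ℕ) + 1) (t k.succ) (t k.castSucc) := by
      intro t
      rw [← Finset.sum_mul, hB 0 (t 0), one_mul]
    simp only [hs]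
    exact ih (fun k => B (k + 1)) (fun k x' => hB (k + 1) x') f

private lemma fwd_sum {X : Type*} [Fintype X] [DecidableEq X] :
    ∀ (n : ℕ) (P : ℕ → X → X → ℝ) (_ : ∀ k x, ∑ x', P k x x' = 1)
      (q1 : X → ℝ) (_ : ∑ x, q1 x = 1),
    ∑ O : Fin (n + 1) → X,
      q1 (O 0) * ∏ k : Fin n, P k (O k.castSucc) (O k.succ) = 1 := by
  intro n
  induction n with
  | zero =>
    intro P hP q1 hq1
    rw [← (Equiv.funUnique (Fin 1) X).symm.sum_comp]
    simpa using hq1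
  | succ n ih =>
    intro P hP q1 hq1
    rw [← (Fin.snocEquiv (fun _ : Fin (n + 2) => X)).sum_comp]
    rw [Fintype.sum_prod_type]
    have key : ∀ (x : X) (t : Fin (n + 1) → X),
        q1 ((Fin.snocEquiv (fun _ : Fin (n + 2) => X)) (x, t) 0) *
          ∏ k : Fin (n + 1), P k ((Fin.snocEquiv (fun _ : Fin (n + 2) => X)) (x, t) k.castSucc)
            ((Fin.snocEquiv (fun _ : Fin (n + 2) => X)) (x, t) k.succ)
        = (q1 (t 0) * ∏ k : Fin n, P k (t k.castSucc) (t k.succ)) * P n (t (Fin.last n)) x := by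
      intro x t
      simp only [Fin.snocEquiv_apply]
      rw [Fin.prod_univ_castSucc]
      have h1 : ∀ k : Fin n,
          P ((k.castSucc : Fin (n+1)) : ℕ)
            ((Fin.snoc t x : Fin (n + 2) → X) (k.castSucc : Fin (n+1)).castSucc)
            ((Fin.snoc t x : Fin (n + 2) → X) (k.castSucc : Fin (n+1)).succ)
          = P k (t k.castSucc) (t k.succ) := by
        intro k
        have e1 : ((k.castSucc : Fin (n+1)).succ : Fin (n+2)) = (k.succ).castSucc := by
          ext; simp
        rw [e1, Fin.snoc_castSucc, Fin.snoc_castSucc, Fin.coe_castSucc]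
      simp only [h1]
      have e2 : ((Fin.last n).succ : Fin (n+2)) = Fin.last (n + 1) := by
        simp [Fin.succ_last]
      have e3 : (0 : Fin (n+2)) = ((0 : Fin (n+1)).castSucc) := rfl
      rw [e2, Fin.snoc_last, e3, Fin.snoc_castSucc, Fin.val_last,
        Fin.snoc_castSucc]
      ring
    simp only [key]
    rw [Finset.sum_comm]
    have hs : ∀ t : Fin (n + 1) → X,
        ∑ x : X, (q1 (t 0) * ∏ k : Fin n, P k (t k.castSucc) (t k.succ)) * P n (t (Fin.last n)) x
        = q1 (t 0) * ∏ k : Fin n, P k (t k.castSucc) (t k.succ) := by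
      intro t
      rw [← Finset.mul_sum, hP n (t (Fin.last n)), mul_one]
    simp only [hs]
    exact ih P hP q1 hq1

/-- Integral fluctuation theorem for a Markovian system: for a forward Markov
chain on a nonempty finite set `X` with `N = n + 1 ≥ 2` time steps, initial
PMF `q₁`, forward kernels `P k`, final-time marginal `qN`, and backward
kernels `B k`, if the forward and backward trajectory measures have equal
supports, then `Σ_{O : P(O)>0} P(O) exp(−σ(O)) = 1`, where
`σ(O) = ln(P(O)/P_B(O))`. -/
theorem integral_fluctuation_theorem {X : Type*} [Fintype X] [DecidableEq X] [Nonempty X]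
    (n : ℕ) (hn : 1 ≤ n)
    (q1 : X → ℝ) (hq0 : ∀ x, 0 ≤ q1 x) (hq1 : ∑ x, q1 x = 1)
    (P : ℕ → X → X → ℝ)
    (hP0 : ∀ k x x', 0 ≤ P k x x') (hP1 : ∀ k x, ∑ x', P k x x' = 1)
    (B : ℕ → X → X → ℝ)
    (hB0 : ∀ k x' x, 0 ≤ B k x' x) (hB1 : ∀ k x', ∑ x, B k x' x = 1)
    (Fwd : (Fin (n + 1) → X) → ℝ)
    (hFwd : ∀ O, Fwd O = q1 (O 0) * ∏ k : Fin n, P k (O k.castSucc) (O k.succ))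
    (qN : X → ℝ)
    (hqN : ∀ x, qN x = ∑ O : Fin (n + 1) → X,
      if O (Fin.last n) = x then Fwd O else 0)
    (Bwd : (Fin (n + 1) → X) → ℝ)
    (hBwd : ∀ O, Bwd O
      = qN (O (Fin.last n)) * ∏ k : Fin n, B k (O k.succ) (O k.castSucc))
    (hsupp : ∀ O, 0 < Fwd O ↔ 0 < Bwd O) :
    ∑ O : Fin (n + 1) → X,
      (if 0 < Fwd O then Fwd O * Real.exp (-Real.log (Fwd O / Bwd O)) else 0) = 1 := by
  have hFwd0 : ∀ O, 0 ≤ Fwd O := by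
    intro O
    rw [hFwd]
    exact mul_nonneg (hq0 _) (Finset.prod_nonneg fun k _ => hP0 _ _ _)
  have hqN0 : ∀ x, 0 ≤ qN x := by
    intro x
    rw [hqN]
    exact Finset.sum_nonneg fun O _ => by
      by_cases h : O (Fin.last n) = x <;> simp [h, hFwd0 O]
  have hBwd0 : ∀ O, 0 ≤ Bwd O := by
    intro O
    rw [hBwd]
    exact mul_nonneg (hqN0 _) (Finset.prod_nonneg fun k _ => hB0 _ _ _)
  have step : ∀ O : Fin (n + 1) → X,
      (if 0 < Fwd O then Fwd O * Real.exp (-Real.log (Fwd O / Bwd O)) else 0) = Bwd O := by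
    intro O
    by_cases h : 0 < Fwd O
    · have hb : 0 < Bwd O := (hsupp O).mp h
      rw [if_pos h, Real.exp_neg, Real.exp_log (div_pos h hb)]
      field_simp
    · rw [if_neg h]
      have h2 : ¬ 0 < Bwd O := fun hb => h ((hsupp O).mpr hb)
      push_neg at h2
      linarith [hBwd0 O]
  rw [Finset.sum_congr rfl (fun O _ => step O)]
  rw [Finset.sum_congr rfl (fun O _ => hBwd O)]
  rw [bwd_sum n B hB1 qN]
  simp only [hqN]
  rw [Finset.sum_comm]
  have hpick : ∀ O : Fin (n + 1) → X,
      (∑ x : X, if O (Fin.last n) = x then Fwd O else 0) = Fwd O := by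
    intro O; simp
  rw [Finset.sum_congr rfl (fun O _ => hpick O)]
  rw [Finset.sum_congr rfl (fun O _ => hFwd O)]
  exact fwd_sum n P hP1 q1 hq1
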